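/- Let $X = \sum_{i=1}^N X_i$ where the $X_i$ are Bernoulli random variables such that for every $k \in [N]$, $\mathbb{E}[X_k \mid X_1,\dots,X_{k-1}] \ge p$ for some $p \in (0,1)$. Let $\mu = Np$. Then for every $0 < \Delta \le \mu/2$, $\Pr[X \le \mu - \Delta] \le \exp\left(-\frac{\Delta^2}{4(\mu-\Delta)}\right)$. -/

import Mathlib

open MeasureTheory ProbabilityTheory
set_option maxHeartbeats 1000000

lemma exp_neg_le_quad (t : ℝ) (ht : 0 ≤ t) : Real.exp (-t) ≤ 1 - t + t^2/2 := by
  have h : (1:ℝ) + t + t^2/2 + t^3/6 ≤ Real.exp t := by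
    have h := Real.sum_le_exp_of_nonneg ht 4
    simp [Finset.sum_range_succ, Nat.factorial] at h
    linarith
  have hpos : (0:ℝ) < 1 - t + t^2/2 := by nlinarith [sq_nonneg (t-1)]
  rw [Real.exp_neg, inv_le_comm₀ (Real.exp_pos t) hpos]
  have key : (1:ℝ) ≤ (1 - t + t^2/2) * (1 + t + t^2/2 + t^3/6) := by
    nlinarith [pow_nonneg ht 3, pow_nonneg ht 4, pow_nonneg ht 5]
  calc (1 - t + t^2/2)⁻¹ ≤ 1 + t + t^2/2 + t^3/6 := by
        rw [inv_le_iff_one_le_mul₀ hpos]; linarith [key]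
    _ ≤ Real.exp t := h

theorem azuma_hoeffding_style_small_deviation
    {Ω : Type*} [MeasurableSpace Ω] (μ : Measure Ω) [IsProbabilityMeasure μ]
    (N : ℕ) (X : ℕ → Ω → ℝ) (p : ℝ) (hp : p ∈ Set.Ioo (0:ℝ) 1)
    (hmeas : ∀ i, Measurable (X i))
    (hBer : ∀ i, ∀ ω, X i ω = 0 ∨ X i ω = 1)
    (hcond : ∀ k < N, ∀ᵐ ω ∂μ,
      p ≤ MeasureTheory.condExp
            (⨆ i : Fin k, MeasurableSpace.comap (X i) Real.measurableSpace) μ (X k) ω)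
    (Δ : ℝ) (hΔpos : 0 < Δ) (hΔ : Δ ≤ N * p / 2) :
    (μ {ω | ∑ i ∈ Finset.range N, X i ω ≤ N * p - Δ}).toReal ≤
      Real.exp (-(Δ ^ 2 / (4 * (N * p - Δ)))) := by
  rename_i mΩ _hprob
  obtain ⟨hp0, hp1⟩ := hp
  set m : ℝ := N * p with hm
  have hm2 : 2 * Δ ≤ m := by linarith
  have hmpos : 0 < m := by linarith
  have hmd : 0 < m - Δ := by linarith
  set t : ℝ := Δ / m with ht
  have htpos : 0 < t := div_pos hΔpos hmpos
  have htm : t * m = Δ := div_mul_cancel₀ Δ hmpos.ne'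
  set c : ℝ := Real.exp (-t) - 1 with hc
  have hcneg : c < 0 := by
    have : Real.exp (-t) < 1 := Real.exp_lt_one_iff.mpr (by linarith)
    simp [hc]; linarith
  set q : ℝ := 1 + c * p with hq
  have hq0 : 0 < q := by
    have h1 : 0 < Real.exp (-t) := Real.exp_pos _
    have : c > -1 := by simp [hc]; linarith
    nlinarith
  clear_value m t c q
  -- bounds on X
  have hX0 : ∀ i ω, 0 ≤ X i ω := fun i ω => by rcases hBer i ω with h | h <;> simp [h]
  have hX1 : ∀ i ω, X i ω ≤ 1 := fun i ω => by rcases hBer i ω with h | h <;> simp [h]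
  -- integrability helper
  have hint : ∀ (f : Ω → ℝ), Measurable f → (∀ ω, |f ω| ≤ 1) → Integrable f μ := by
    intro f hf hb
    exact (integrable_const (1:ℝ)).mono' hf.aestronglyMeasurable
      (ae_of_all _ fun ω => by simpa [Real.norm_eq_abs] using hb ω)
  -- factor bounds
  have hfac0 : ∀ i ω, 0 ≤ Real.exp (-t * X i ω) := fun i ω => (Real.exp_pos _).le
  have hfac1 : ∀ i ω, Real.exp (-t * X i ω) ≤ 1 := fun i ω =>
    Real.exp_le_one_iff.mpr (by nlinarith [hX0 i ω])
  have hg0 : ∀ k ω, 0 ≤ ∏ i ∈ Finset.range k, Real.exp (-t * X i ω) :=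
    fun k ω => Finset.prod_nonneg fun i _ => hfac0 i ω
  have hg1 : ∀ k ω, ∏ i ∈ Finset.range k, Real.exp (-t * X i ω) ≤ 1 :=
    fun k ω => Finset.prod_le_one (fun i _ => hfac0 i ω) (fun i _ => hfac1 i ω)
  have hgmeas : ∀ k, Measurable (fun ω => ∏ i ∈ Finset.range k, Real.exp (-t * X i ω)) :=
    fun k => Finset.measurable_prod _ fun i _ => ((hmeas i).const_mul (-t)).exp
  have hgint : ∀ k, Integrable (fun ω => ∏ i ∈ Finset.range k, Real.exp (-t * X i ω)) μ :=
    fun k => hint _ (hgmeas k) fun ω => abs_le.mpr ⟨by linarith [hg0 k ω], hg1 k ω⟩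
  -- the key induction
  have key : ∀ k, k ≤ N → ∫ ω, ∏ i ∈ Finset.range k, Real.exp (-t * X i ω) ∂μ ≤ q ^ k := by
    intro k
    induction k with
    | zero => intro _; simp
    | succ k ih =>
      intro hkN
      have hk : k < N := hkN
      have ihk := ih hk.le
      set F : MeasurableSpace Ω := ⨆ i : Fin k, MeasurableSpace.comap (X i) Real.measurableSpace
        with hF
      have hle : F ≤ mΩ := iSup_le fun i => (hmeas i).comap_le
      set g : Ω → ℝ := fun ω => ∏ i ∈ Finset.range k, Real.exp (-t * X i ω) with hgdef
      set f : Ω → ℝ := fun ω => Real.exp (-t * X k ω) with hfdef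
      have hgF : StronglyMeasurable[F] g := by
        apply Measurable.stronglyMeasurable
        apply Finset.measurable_prod
        intro i hi
        have hiX : Measurable[F] (X i) := by
          refine Measurable.of_comap_le ?_
          rw [hF]
          exact le_iSup (fun j : Fin k => MeasurableSpace.comap (X j) Real.measurableSpace)
            ⟨i, Finset.mem_range.mp hi⟩
        exact (hiX.const_mul (-t)).exp
      have hf_int : Integrable f μ := hint f ((hmeas k).const_mul (-t)).exp
        (fun ω => abs_le.mpr ⟨by linarith [hfac0 k ω], hfac1 k ω⟩)
      have hg_int : Integrable g μ := hgint k
      have hgf_int : Integrable (g * f) μ := by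
        refine hint _ ((hgmeas k).mul ((hmeas k).const_mul (-t)).exp) (fun ω => abs_le.mpr ⟨?_, ?_⟩)
        · calc (-1:ℝ) ≤ 0 := by norm_num
            _ ≤ (g * f) ω := mul_nonneg (hg0 k ω) (hfac0 k ω)
        · have h1 := hg0 k ω; have h2 := hg1 k ω; have h3 := hfac0 k ω; have h4 := hfac1 k ω
          calc (g * f) ω = g ω * f ω := rfl
            _ ≤ 1 * 1 := by apply mul_le_mul h2 h4 h3 zero_le_one
            _ = 1 := by ring
      have hXk_int : Integrable (X k) μ := hint _ (hmeas k)
        (fun ω => abs_le.mpr ⟨by linarith [hX0 k ω], hX1 k ω⟩)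
      have hfeq : f = (fun _ => (1:ℝ)) + c • (X k) := by
        funext ω
        rcases hBer k ω with h | h <;>
          simp [hfdef, h, hc, smul_eq_mul]
      have hcondle : ∀ᵐ ω ∂μ, (μ[f|F]) ω ≤ q := by
        have h2 : μ[c • (X k)|F] =ᵐ[μ] c • μ[X k|F] := condExp_smul c (X k) F
        have h1 : μ[f|F] =ᵐ[μ] fun ω => 1 + c * (μ[X k|F]) ω := by
          rw [hfeq]
          calc μ[(fun _ => (1:ℝ)) + c • (X k)|F]
              =ᵐ[μ] μ[(fun _ => (1:ℝ))|F] + μ[c • (X k)|F] :=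
                condExp_add (integrable_const 1) (hXk_int.smul c) F
            _ =ᵐ[μ] fun ω => 1 + c * (μ[X k|F]) ω := by
                filter_upwards [h2] with ω hω
                simp [condExp_const hle (1:ℝ), hω, smul_eq_mul]
        have hcd := hcond k hk
        simp only [← hF] at hcd
        filter_upwards [h1, hcd] with ω hω1 hω2
        rw [hω1, hq]
        nlinarith [hcneg.le]
      have hmul := condExp_mul_of_stronglyMeasurable_left hgF hgf_int hf_int
      have hstep : ∫ ω, ∏ i ∈ Finset.range (k+1), Real.exp (-t * X i ω) ∂μ
          = ∫ ω, g ω * (μ[f|F]) ω ∂μ := by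
        have hprod : (fun ω => ∏ i ∈ Finset.range (k+1), Real.exp (-t * X i ω)) = g * f := by
          funext ω; rw [Finset.prod_range_succ]; rfl
        calc ∫ ω, ∏ i ∈ Finset.range (k+1), Real.exp (-t * X i ω) ∂μ
            = ∫ ω, (g * f) ω ∂μ := by rw [hprod]
          _ = ∫ ω, (μ[g * f|F]) ω ∂μ := (integral_condExp hle (f := g * f)).symm
          _ = ∫ ω, g ω * (μ[f|F]) ω ∂μ :=
              integral_congr_ae (by filter_upwards [hmul] with ω hω; exact hω)
      rw [hstep]
      have hint1 : Integrable (fun ω => g ω * (μ[f|F]) ω) μ :=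
        (integrable_condExp).congr hmul
      calc ∫ ω, g ω * (μ[f|F]) ω ∂μ ≤ ∫ ω, q * g ω ∂μ := by
            refine integral_mono_ae hint1 (hg_int.const_mul q) ?_
            filter_upwards [hcondle] with ω hω
            calc g ω * (μ[f|F]) ω ≤ g ω * q := mul_le_mul_of_nonneg_left hω (hg0 k ω)
              _ = q * g ω := mul_comm _ _
        _ = q * ∫ ω, g ω ∂μ := integral_const_mul q g
        _ ≤ q * q ^ k := mul_le_mul_of_nonneg_left ihk hq0.le
        _ = q ^ (k+1) := by ring
  -- Markov
  have hε : (0:ℝ) < Real.exp (-t * (m - Δ)) := Real.exp_pos _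
  have markov := mul_meas_ge_le_integral_of_nonneg
    (ae_of_all μ (hg0 N)) (hgint N) (Real.exp (-t * (m - Δ)))
  have hsub : μ {ω | ∑ i ∈ Finset.range N, X i ω ≤ m - Δ} ≤
      μ {ω | Real.exp (-t * (m - Δ)) ≤ ∏ i ∈ Finset.range N, Real.exp (-t * X i ω)} := by
    apply measure_mono
    intro ω hω
    simp only [Set.mem_setOf_eq] at hω ⊢
    rw [← Real.exp_sum]
    · apply Real.exp_le_exp.mpr
      rw [← Finset.mul_sum]
      nlinarith
  have hfin : (μ {ω | ∑ i ∈ Finset.range N, X i ω ≤ m - Δ}).toReal ≤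
      (q ^ N) / Real.exp (-t * (m - Δ)) := by
    rw [le_div_iff₀ hε]
    calc (μ {ω | ∑ i ∈ Finset.range N, X i ω ≤ m - Δ}).toReal * Real.exp (-t * (m - Δ))
        = Real.exp (-t * (m - Δ)) * (μ {ω | ∑ i ∈ Finset.range N, X i ω ≤ m - Δ}).toReal := by ring
      _ ≤ Real.exp (-t * (m - Δ)) *
          (μ {ω | Real.exp (-t * (m - Δ)) ≤ ∏ i ∈ Finset.range N, Real.exp (-t * X i ω)}).toReal := by
          apply mul_le_mul_of_nonneg_left _ hε.le
          exact ENNReal.toReal_mono (measure_ne_top _ _) hsub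
      _ ≤ ∫ ω, ∏ i ∈ Finset.range N, Real.exp (-t * X i ω) ∂μ := markov
      _ ≤ q ^ N := key N le_rfl
  refine hfin.trans ?_
  -- final exponent computation
  have hqle : q ≤ Real.exp (c * p) := by
    have := Real.add_one_le_exp (c * p)
    linarith
  have hqN : q ^ N ≤ Real.exp (m * c) := by
    calc q ^ N ≤ (Real.exp (c * p)) ^ N := pow_le_pow_left₀ hq0.le hqle N
      _ = Real.exp (N * (c * p)) := by rw [← Real.exp_nat_mul]
      _ = Real.exp (m * c) := by rw [hm]; ring_nf
  have ht_half : t ≤ 1/2 := by nlinarith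
  have hexp := exp_neg_le_quad t htpos.le
  have e1 : t^2*m*m = t*Δ*m := by rw [pow_two, mul_assoc t t m, htm]
  have e1d : t^2*m*Δ = t*Δ*Δ := by rw [pow_two, mul_assoc t t m, htm]
  have e2 : t*Δ*m = Δ^2 := by rw [mul_comm t Δ, mul_assoc, htm, pow_two]
  have hkey : m * c + t * (m - Δ) ≤ -(Δ ^ 2 / (4 * (m - Δ))) := by
    rw [← neg_div, le_div_iff₀ (by linarith : (0:ℝ) < 4*(m-Δ))]
    have h1 : m * c ≤ m * (-t + t^2/2) := by
      have h2 := mul_le_mul_of_nonneg_left hexp hmpos.le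
      rw [hc]; nlinarith
    have step1 : (m*c + t*(m-Δ))*(4*(m-Δ)) ≤ (m*(-t+t^2/2) + t*(m-Δ))*(4*(m-Δ)) :=
      mul_le_mul_of_nonneg_right (by linarith) (by linarith : (0:ℝ) ≤ 4*(m-Δ))
    have h3 : 0 ≤ (1-2*t)*Δ^2 := mul_nonneg (by linarith) (sq_nonneg Δ)
    have step2 : (m*(-t+t^2/2) + t*(m-Δ))*(4*(m-Δ)) ≤ -Δ^2 := by linarith [e1, e1d, e2, h3]
    linarith
  calc q ^ N / Real.exp (-t * (m - Δ)) ≤ Real.exp (m * c) / Real.exp (-t * (m - Δ)) := by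
        gcongr
      _ = Real.exp (m * c + t * (m - Δ)) := by
        rw [← Real.exp_sub]; ring_nf
      _ ≤ Real.exp (-(Δ ^ 2 / (4 * (m - Δ)))) := Real.exp_le_exp.mpr hkey
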